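/- Let T and W be independent real-valued random variables on a probability space (Ω, 𝓕, P), the law of T having density f₁ with respect to Lebesgue measure and the law of W having density g with respect to Lebesgue measure, where g vanishes on (−∞, c] for a fixed real constant c. Define A := T if T > c, and A := W if T ≤ c, and set q := P(T ≤ c). Then, with the convention 0/0 = 0, a version of the conditional expectation E[1_{T > c} | σ(A)] is given P-almost everywhere by ω ↦ f₁(A(ω)) / ( f₁(A(ω)) + q·g(A(ω)) ). -/

import Mathlib

open MeasureTheory ProbabilityTheory

/-- Bayes-type formula for the zero-truncation scheme: with `A := T` if `T > c`
and `A := W` otherwise, and `q := P(T ≤ c)`, a version of `E[1_{T>c} | σ(A)]` is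
`ω ↦ f₁(A(ω)) / (f₁(A(ω)) + q·g(A(ω)))` (with the convention `0/0 = 0`, which is
how division on `ℝ` behaves in Lean). -/
theorem condexp_first_event_untruncated {Ω : Type*} [MeasurableSpace Ω]
    (P : Measure Ω) [IsProbabilityMeasure P]
    (T W : Ω → ℝ) (hT : Measurable T) (hW : Measurable W)
    (hindep : IndepFun T W P)
    (f₁ g : ℝ → ℝ) (hf₁ : Measurable f₁) (hg : Measurable g)
    (hf₁nn : ∀ a, 0 ≤ f₁ a) (hgnn : ∀ a, 0 ≤ g a)
    (hmapT : Measure.map T P = volume.withDensity (fun a => ENNReal.ofReal (f₁ a)))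
    (hmapW : Measure.map W P = volume.withDensity (fun a => ENNReal.ofReal (g a)))
    (c : ℝ) (hgc : ∀ a ≤ c, g a = 0) :
    P[Set.indicator {ω | c < T ω} (fun _ => (1 : ℝ))
        | MeasurableSpace.comap (fun ω => if c < T ω then T ω else W ω)
            (inferInstance : MeasurableSpace ℝ)]
      =ᵐ[P]
    fun ω =>
      f₁ (if c < T ω then T ω else W ω)
        / (f₁ (if c < T ω then T ω else W ω)
            + (P {ω' | T ω' ≤ c}).toReal * g (if c < T ω then T ω else W ω)) := by
  set q : ℝ := (P {ω' | T ω' ≤ c}).toReal with hqdef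
  set φ : ℝ → ℝ := fun a => f₁ a / (f₁ a + q * g a) with hφdef
  set A : Ω → ℝ := fun ω => if c < T ω then T ω else W ω with hAdef
  have hqnn : (0:ℝ) ≤ q := ENNReal.toReal_nonneg
  have hu : MeasurableSet {ω | c < T ω} := hT measurableSet_Ioi
  have hA : Measurable A := Measurable.ite hu hT hW
  have hφm : Measurable φ := hf₁.div (hf₁.add (measurable_const.mul hg))
  have hdnn : ∀ a, (0:ℝ) ≤ f₁ a + q * g a := fun a =>
    add_nonneg (hf₁nn a) (mul_nonneg hqnn (hgnn a))
  have hφnn : ∀ a, 0 ≤ φ a := fun a => div_nonneg (hf₁nn a) (hdnn a)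
  have hφle : ∀ a, φ a ≤ 1 := fun a =>
    div_le_one_of_le₀ (le_add_of_nonneg_right (mul_nonneg hqnn (hgnn a))) (hdnn a)
  have hkey : ∀ a, φ a * (f₁ a + q * g a) = f₁ a := by
    intro a
    rcases eq_or_ne (f₁ a + q * g a) 0 with h | h
    · have h1 : f₁ a = 0 := by nlinarith [mul_nonneg hqnn (hgnn a), hf₁nn a]
      simp [hφdef, h, h1]
    · simp only [hφdef]; exact div_mul_cancel₀ _ h
  -- integrability of densities
  have hf₁lint : (∫⁻ a, ENNReal.ofReal (f₁ a)) = 1 := by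
    have h1 : Measure.map T P Set.univ = 1 := by
      rw [Measure.map_apply hT MeasurableSet.univ]; simp
    rw [hmapT] at h1
    simpa [withDensity_apply _ MeasurableSet.univ] using h1
  have hglint : (∫⁻ a, ENNReal.ofReal (g a)) = 1 := by
    have h1 : Measure.map W P Set.univ = 1 := by
      rw [Measure.map_apply hW MeasurableSet.univ]; simp
    rw [hmapW] at h1
    simpa [withDensity_apply _ MeasurableSet.univ] using h1
  have hf₁int : Integrable f₁ := by
    refine ⟨hf₁.aestronglyMeasurable, ?_⟩
    rw [HasFiniteIntegral]
    have : (∫⁻ a, (‖f₁ a‖₊ : ENNReal)) = 1 := by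
      rw [← hf₁lint]; congr 1; ext a; exact Real.enorm_eq_ofReal (hf₁nn a)
    exact lt_of_eq_of_lt this ENNReal.one_lt_top
  have hgint : Integrable g := by
    refine ⟨hg.aestronglyMeasurable, ?_⟩
    rw [HasFiniteIntegral]
    have : (∫⁻ a, (‖g a‖₊ : ENNReal)) = 1 := by
      rw [← hglint]; congr 1; ext a; exact Real.enorm_eq_ofReal (hgnn a)
    exact lt_of_eq_of_lt this ENNReal.one_lt_top
  have hφf₁int : Integrable (fun a => φ a * f₁ a) := by
    refine hf₁int.mono ((hφm.mul hf₁).aestronglyMeasurable) (ae_of_all _ fun a => ?_)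
    rw [Real.norm_eq_abs, Real.norm_eq_abs, abs_of_nonneg (mul_nonneg (hφnn a) (hf₁nn a)),
      abs_of_nonneg (hf₁nn a)]
    calc φ a * f₁ a ≤ 1 * f₁ a := mul_le_mul_of_nonneg_right (hφle a) (hf₁nn a)
      _ = f₁ a := one_mul _
  have hφgint : Integrable (fun a => φ a * g a) := by
    refine hgint.mono ((hφm.mul hg).aestronglyMeasurable) (ae_of_all _ fun a => ?_)
    rw [Real.norm_eq_abs, Real.norm_eq_abs, abs_of_nonneg (mul_nonneg (hφnn a) (hgnn a)),
      abs_of_nonneg (hgnn a)]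
    calc φ a * g a ≤ 1 * g a := mul_le_mul_of_nonneg_right (hφle a) (hgnn a)
      _ = g a := one_mul _
  have hm : MeasurableSpace.comap A (inferInstance : MeasurableSpace ℝ) ≤ _ := hA.comap_le
  have hφAint : Integrable (fun x => φ (A x)) P := by
    refine memLp_one_iff_integrable.mp
      (MemLp.of_bound ((hφm.comp hA).aestronglyMeasurable) 1 (ae_of_all _ fun x => ?_))
    rw [Real.norm_eq_abs, abs_of_nonneg (hφnn _)]
    exact hφle _
  have hfind : Integrable (Set.indicator {ω | c < T ω} (fun _ => (1 : ℝ))) P :=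
    (integrable_const (1:ℝ)).indicator hu
  -- the nnreal versions of the densities
  have hwdT : (volume.withDensity (fun a => ENNReal.ofReal (f₁ a)))
      = volume.withDensity (fun a => ((fun b => (f₁ b).toNNReal) a : ENNReal)) := rfl
  have hwdW : (volume.withDensity (fun a => ENNReal.ofReal (g a)))
      = volume.withDensity (fun a => ((fun b => (g b).toNNReal) a : ENNReal)) := rfl
  refine (ae_eq_condExp_of_forall_setIntegral_eq hm hfind
    (fun s _ _ => hφAint.integrableOn) (fun s hs _ => ?_) ?_).symm
  swap
  · exact StronglyMeasurable.aestronglyMeasurable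
      (Measurable.stronglyMeasurable (hφm.comp (Measurable.of_comap_le le_rfl)))
  obtain ⟨B, hB, rfl⟩ := hs
  have hBm : MeasurableSet (B ∩ Set.Ioi c) := hB.inter measurableSet_Ioi
  -- RHS computation
  have hpre : A ⁻¹' B ∩ {ω | c < T ω} = T ⁻¹' (B ∩ Set.Ioi c) := by
    ext ω
    by_cases h : c < T ω <;>
      simp [hAdef, h, Set.mem_preimage, Set.mem_Ioi]
  have hRHS : ∫ x in A ⁻¹' B, Set.indicator {ω | c < T ω} (fun _ => (1:ℝ)) x ∂P
      = ∫ a in B ∩ Set.Ioi c, f₁ a := by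
    rw [setIntegral_indicator hu, hpre, setIntegral_const, smul_eq_mul, mul_one, measureReal_def,
      ← Measure.map_apply hT hBm, hmapT, withDensity_apply _ hBm]
    rw [integral_eq_lintegral_of_nonneg_ae (ae_of_all _ fun a => hf₁nn a)
      (hf₁.aestronglyMeasurable.restrict)]
  -- term 1
  have h1 : ∫ x in A ⁻¹' B ∩ {ω | c < T ω}, φ (A x) ∂P
      = ∫ a in B ∩ Set.Ioi c, φ a * f₁ a := by
    rw [hpre]
    have he : ∀ x ∈ T ⁻¹' (B ∩ Set.Ioi c), φ (A x) = φ (T x) := by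
      intro x hx
      have : c < T x := hx.2
      simp [hAdef, this]
    rw [setIntegral_congr_fun (hT hBm) he,
      ← setIntegral_map hBm hφm.aestronglyMeasurable hT.aemeasurable, hmapT, hwdT,
      setIntegral_withDensity_eq_setIntegral_smul (hf₁.real_toNNReal) _ hBm]
    refine setIntegral_congr_fun hBm fun a _ => ?_
    simp [NNReal.smul_def, Real.coe_toNNReal _ (hf₁nn a), mul_comm]
  -- term 2
  have hset2 : A ⁻¹' B \ {ω | c < T ω} = {x | T x ≤ c} ∩ W ⁻¹' B := by
    ext ω
    by_cases h : c < T ω <;>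
      simp [hAdef, h, Set.mem_preimage, not_lt.mp, le_of_not_gt, h]
  have h2 : ∫ x in A ⁻¹' B \ {ω | c < T ω}, φ (A x) ∂P = q * ∫ a in B, φ a * g a := by
    have hprod : ∫ x in A ⁻¹' B \ {ω | c < T ω}, φ (A x) ∂P
        = ∫ x, (Set.indicator (Set.Iic c) (fun _ => (1:ℝ)) (T x))
            * (Set.indicator B φ (W x)) ∂P := by
      rw [← integral_indicator ((hA hB).diff hu)]
      refine integral_congr_ae (ae_of_all _ fun x => ?_)
      beta_reduce
      by_cases h1 : c < T x
      · have hx : x ∉ A ⁻¹' B \ {ω | c < T ω} := fun hx => hx.2 h1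
        have hni : T x ∉ Set.Iic c := by simpa using h1
        rw [Set.indicator_of_notMem hx, Set.indicator_of_notMem hni, zero_mul]
      · have hTx : T x ≤ c := not_lt.mp h1
        by_cases h2 : W x ∈ B
        · have hx : x ∈ A ⁻¹' B \ {ω | c < T ω} := by
            constructor
            · simp [hAdef, h1, h2]
            · exact h1
          have hAW : A x = W x := by simp [hAdef, h1]
          rw [Set.indicator_of_mem hx, Set.indicator_of_mem (Set.mem_Iic.mpr hTx),
            Set.indicator_of_mem h2, hAW, one_mul]
        · have hx : x ∉ A ⁻¹' B \ {ω | c < T ω} := by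
            intro hx
            apply h2
            have := hx.1
            simpa [hAdef, h1] using this
          rw [Set.indicator_of_notMem hx, Set.indicator_of_notMem h2, mul_zero]
    rw [hprod]
    have hFm : Measurable (Set.indicator (Set.Iic c) (fun _ => (1:ℝ))) :=
      measurable_const.indicator measurableSet_Iic
    have hGm : Measurable (Set.indicator B φ) := hφm.indicator hB
    have hind : IndepFun (fun x => Set.indicator (Set.Iic c) (fun _ => (1:ℝ)) (T x))
        (fun x => Set.indicator B φ (W x)) P := hindep.comp hFm hGm
    rw [hind.integral_fun_mul_eq_mul_integral ((hFm.comp hT).aestronglyMeasurable)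
      ((hGm.comp hW).aestronglyMeasurable)]
    congr 1
    · -- ∫ F(T) = q
      have heq : (fun x => Set.indicator (Set.Iic c) (fun _ => (1:ℝ)) (T x))
          = Set.indicator (T ⁻¹' Set.Iic c) (fun _ => (1:ℝ)) := by
        ext x
        by_cases h : T x ≤ c <;> simp [h]
      rw [heq, integral_indicator (hT measurableSet_Iic), setIntegral_const, smul_eq_mul,
        mul_one, hqdef]
      rfl
    · -- ∫ G(W) = ∫_B φ g
      rw [← integral_map hW.aemeasurable hGm.aestronglyMeasurable, hmapW,
        integral_indicator hB, hwdW,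
        setIntegral_withDensity_eq_setIntegral_smul (hg.real_toNNReal) _ hB]
      refine setIntegral_congr_fun hB fun a _ => ?_
      simp [NNReal.smul_def, Real.coe_toNNReal _ (hgnn a), mul_comm]
  -- the g-integral over B restricts to B ∩ Ioi c
  have h3 : ∫ a in B, φ a * g a = ∫ a in B ∩ Set.Ioi c, φ a * g a := by
    rw [← integral_inter_add_diff measurableSet_Ioi hφgint.integrableOn]
    have : ∫ a in B \ Set.Ioi c, φ a * g a = 0 := by
      refine setIntegral_eq_zero_of_forall_eq_zero fun a ha => ?_
      have : g a = 0 := hgc a (not_lt.mp ha.2)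
      simp [this]
    rw [this, add_zero]
  -- combine
  rw [← integral_inter_add_diff hu hφAint.integrableOn, h1, h2, h3, hRHS]
  rw [← integral_const_mul]
  rw [← integral_add hφf₁int.integrableOn ((hφgint.const_mul q).integrableOn)]
  refine setIntegral_congr_fun hBm fun a _ => ?_
  have := hkey a
  ring_nf
  ring_nf at this
  linarith [this]
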